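/- Let A be a finite nonempty set and let θ, θ' : A → ℝ. Then KL(Softmax(θ) ‖ Softmax(θ')) ≤ (1/2)·‖θ − θ'‖∞². -/

import Mathlib

open Finset

/-- The softmax distribution associated with a score vector on a finite type. -/
noncomputable def softmax {A : Type*} [Fintype A] (z : A → ℝ) : A → ℝ :=
  fun a => Real.exp (z a) / ∑ b, Real.exp (z b)

/-- KL divergence between two distributions on a finite type
(with the convention `0 * log 0 = 0`, which holds in Lean since `Real.log 0 = 0`). -/
noncomputable def KLdiv {A : Type*} [Fintype A] (p q : A → ℝ) : ℝ :=
  ∑ a, p a * Real.log (p a / q a)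

/-- quadratic KL bound between softmax distributions:
`KL(Softmax(θ) ‖ Softmax(θ')) ≤ (1/2) ‖θ − θ'‖∞²`. -/

lemma key_aux {A : Type*} [Fintype A] [Nonempty A] (θ' δ : A → ℝ) (M : ℝ)
    (hM : ∀ a, |δ a| ≤ M) :
    (∑ a, Real.exp (θ' a + δ a) * δ a) / (∑ a, Real.exp (θ' a + δ a))
      - Real.log (∑ a, Real.exp (θ' a + δ a)) + Real.log (∑ a, Real.exp (θ' a))
      ≤ M ^ 2 / 2 := by
  set S : ℝ → ℝ := fun t => ∑ a, Real.exp (θ' a + t * δ a) with hSdef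
  set N : ℝ → ℝ := fun t => ∑ a, Real.exp (θ' a + t * δ a) * δ a with hNdef
  set Q : ℝ → ℝ := fun t => ∑ a, Real.exp (θ' a + t * δ a) * δ a * δ a with hQdef
  have hSpos : ∀ t, 0 < S t := fun t =>
    Finset.sum_pos (fun a _ => Real.exp_pos _) Finset.univ_nonempty
  have hlin : ∀ (a : A) (t : ℝ), HasDerivAt (fun t : ℝ => θ' a + t * δ a) (δ a) t := by
    intro a t
    simpa using (hasDerivAt_mul_const (δ a)).const_add (θ' a)
  have hSd : ∀ t, HasDerivAt S (N t) t := by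
    intro t
    apply HasDerivAt.fun_sum
    intro a _
    exact (hlin a t).exp
  have hNd : ∀ t, HasDerivAt N (Q t) t := by
    intro t
    apply HasDerivAt.fun_sum
    intro a _
    exact ((hlin a t).exp).mul_const (δ a)
  set φ : ℝ → ℝ := fun t => N t / S t with hφdef
  set ψ : ℝ → ℝ := fun t => Real.log (S t) with hψdef
  have hφd : ∀ t, HasDerivAt φ ((Q t * S t - N t * N t) / S t ^ 2) t := by
    intro t
    exact (hNd t).div (hSd t) (hSpos t).ne'
  have hψd : ∀ t, HasDerivAt ψ (φ t) t := by
    intro t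
    exact (hSd t).log (hSpos t).ne'
  set h : ℝ → ℝ := fun t => t * φ t - ψ t + ψ 0 - M ^ 2 / 2 * t ^ 2 with hhdef
  have hhd : ∀ t, HasDerivAt h
      (t * ((Q t * S t - N t * N t) / S t ^ 2) - M ^ 2 * t) t := by
    intro t
    have h1 : HasDerivAt (fun t : ℝ => t * φ t) (1 * φ t + t * ((Q t * S t - N t * N t) / S t ^ 2)) t :=
      (hasDerivAt_id t).mul (hφd t)
    have h2 : HasDerivAt (fun t : ℝ => M ^ 2 / 2 * t ^ 2) (M ^ 2 / 2 * (2 * t ^ 1)) t :=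
      (hasDerivAt_pow 2 t).const_mul _
    have := ((h1.sub (hψd t)).add_const (ψ 0)).sub h2
    exact this.congr_deriv (by ring)
  have hD : ∀ t, (Q t * S t - N t * N t) / S t ^ 2 ≤ M ^ 2 := by
    intro t
    rw [div_le_iff₀ (by positivity)]
    have hQle : Q t ≤ M ^ 2 * S t := by
      rw [hQdef, hSdef, Finset.mul_sum]
      apply Finset.sum_le_sum
      intro a _
      have h1 : δ a * δ a ≤ M ^ 2 := by
        have := hM a
        nlinarith [abs_nonneg (δ a), sq_abs (δ a), neg_abs_le (δ a), le_abs_self (δ a)]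
      calc Real.exp (θ' a + t * δ a) * δ a * δ a
          = (δ a * δ a) * Real.exp (θ' a + t * δ a) := by ring
        _ ≤ M ^ 2 * Real.exp (θ' a + t * δ a) := by
            exact mul_le_mul_of_nonneg_right h1 (Real.exp_pos _).le
    nlinarith [hSpos t, mul_le_mul_of_nonneg_right hQle (hSpos t).le, sq_nonneg (N t)]
  have hanti : AntitoneOn h (Set.Icc 0 1) := by
    apply antitoneOn_of_deriv_nonpos (convex_Icc 0 1)
    · exact (Differentiable.continuous (fun t => (hhd t).differentiableAt)).continuousOn
    · intro t ht
      exact ((hhd t).differentiableAt).differentiableWithinAt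
    · intro t ht
      rw [interior_Icc] at ht
      rw [(hhd t).deriv]
      have := hD t
      have ht0 : 0 ≤ t := ht.1.le
      nlinarith [mul_le_mul_of_nonneg_left (hD t) ht0]
  have h10 : h 1 ≤ h 0 := hanti (by norm_num) (by norm_num) (by norm_num)
  have h0 : h 0 = 0 := by simp [hhdef]
  rw [h0] at h10
  have h1eq : h 1 = (∑ a, Real.exp (θ' a + δ a) * δ a) / (∑ a, Real.exp (θ' a + δ a))
      - Real.log (∑ a, Real.exp (θ' a + δ a)) + Real.log (∑ a, Real.exp (θ' a))
      - M ^ 2 / 2 := by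
    simp [hhdef, hφdef, hψdef, hNdef, hSdef]
  linarith [h1eq ▸ h10]

theorem stmt3 {A : Type*} [Fintype A] [Nonempty A] (θ θ' : A → ℝ) :
    KLdiv (softmax θ) (softmax θ')
      ≤ (1/2) * (Finset.univ.sup' Finset.univ_nonempty (fun a => |θ a - θ' a|))^2 := by
  set M : ℝ := Finset.univ.sup' Finset.univ_nonempty (fun a => |θ a - θ' a|) with hMdef
  set Z : ℝ := ∑ a, Real.exp (θ a) with hZdef
  set Z' : ℝ := ∑ a, Real.exp (θ' a) with hZ'def
  have hZpos : 0 < Z := Finset.sum_pos (fun a _ => Real.exp_pos _) Finset.univ_nonempty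
  have hZ'pos : 0 < Z' := Finset.sum_pos (fun a _ => Real.exp_pos _) Finset.univ_nonempty
  have hlog : ∀ a, Real.log (softmax θ a / softmax θ' a)
      = (θ a - θ' a) + (Real.log Z' - Real.log Z) := by
    intro a
    unfold softmax
    rw [show (Real.exp (θ a) / Z) / (Real.exp (θ' a) / Z')
        = (Real.exp (θ a) * Z') / (Real.exp (θ' a) * Z) by
      field_simp]
    rw [Real.log_div (by positivity) (by positivity),
        Real.log_mul (Real.exp_ne_zero _) hZ'pos.ne',
        Real.log_mul (Real.exp_ne_zero _) hZpos.ne',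
        Real.log_exp, Real.log_exp]
    ring
  have hsum1 : ∑ a, softmax θ a = 1 := by
    unfold softmax
    rw [← Finset.sum_div]
    exact div_self hZpos.ne'
  have hKL : KLdiv (softmax θ) (softmax θ')
      = (∑ a, Real.exp (θ a) * (θ a - θ' a)) / Z + (Real.log Z' - Real.log Z) := by
    unfold KLdiv
    calc ∑ a, softmax θ a * Real.log (softmax θ a / softmax θ' a)
        = ∑ a, (softmax θ a * (θ a - θ' a) + softmax θ a * (Real.log Z' - Real.log Z)) := by
          apply Finset.sum_congr rfl
          intro a _
          rw [hlog a]; ring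
      _ = (∑ a, softmax θ a * (θ a - θ' a)) + (∑ a, softmax θ a) * (Real.log Z' - Real.log Z) := by
          rw [Finset.sum_add_distrib, Finset.sum_mul]
      _ = (∑ a, Real.exp (θ a) * (θ a - θ' a)) / Z + (Real.log Z' - Real.log Z) := by
          rw [hsum1, one_mul]
          congr 1
          rw [Finset.sum_div]
          apply Finset.sum_congr rfl
          intro a _
          unfold softmax
          ring
  have hM : ∀ a, |(fun a => θ a - θ' a) a| ≤ M := fun a =>
    Finset.le_sup' (fun a => |θ a - θ' a|) (Finset.mem_univ a)
  have key := key_aux θ' (fun a => θ a - θ' a) M hM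
  simp only [show ∀ a, θ' a + (θ a - θ' a) = θ a from fun a => by ring] at key
  rw [hKL]
  have heq : (∑ a, Real.exp (θ a) * (θ a - θ' a)) / Z + (Real.log Z' - Real.log Z)
      = (∑ a, Real.exp (θ a) * (θ a - θ' a)) / (∑ a, Real.exp (θ a))
        - Real.log (∑ a, Real.exp (θ a)) + Real.log (∑ a, Real.exp (θ' a)) := by
    rw [hZdef, hZ'def]; ring
  rw [heq]
  linarith
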